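/- A topological semiring (R, +, ·), whose operations are continuous, is profinite (representable as a projective limit of finite discrete semirings, equivalently residually finite and compact) if and only if R is a totally disconnected compact Hausdorff space. -/

import Mathlib

lemma box_decomp {X Y : Type} [TopologicalSpace X] [TopologicalSpace Y]
    [CompactSpace X] [T2Space X] [TotallyDisconnectedSpace X]
    [CompactSpace Y] [T2Space Y] [TotallyDisconnectedSpace Y]
    {V : Set (X × Y)} (hV : IsClopen V) :
    ∃ (ι : Type) (_ : Finite ι) (A : ι → Set X) (B : ι → Set Y),
      (∀ i, IsClopen (A i)) ∧ (∀ i, IsClopen (B i)) ∧ V = ⋃ i, A i ×ˢ B i := by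
  have key : ∀ p ∈ V, ∃ (A : Set X) (B : Set Y),
      IsClopen A ∧ IsClopen B ∧ p ∈ A ×ˢ B ∧ A ×ˢ B ⊆ V := by
    intro p hp
    obtain ⟨u, v, hu, hv, hpu, hpv, huv⟩ := isOpen_prod_iff.mp hV.2 p.1 p.2 hp
    obtain ⟨A, hA, hpA, hAu⟩ := compact_exists_isClopen_in_isOpen hu hpu
    obtain ⟨B, hB, hpB, hBv⟩ := compact_exists_isClopen_in_isOpen hv hpv
    exact ⟨A, B, hA, hB, ⟨hpA, hpB⟩, (Set.prod_mono hAu hBv).trans huv⟩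
  choose! A B hA hB hmem hsub using key
  have hcomp : IsCompact V := hV.1.isCompact
  obtain ⟨s, hs⟩ := hcomp.elim_finite_subcover (fun p : V => A p ×ˢ B p)
    (fun p => ((hA p p.2).2.prod (hB p p.2).2))
    (fun p hp => Set.mem_iUnion.mpr ⟨⟨p, hp⟩, hmem p hp⟩)
  refine ⟨{p : V // p ∈ s}, inferInstance, fun i => A i.1, fun i => B i.1,
    fun i => hA i.1 i.1.2, fun i => hB i.1 i.1.2, le_antisymm ?_ ?_⟩
  · intro p hp
    obtain ⟨q, hq1, hq2⟩ := Set.mem_iUnion₂.mp (hs hp)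
    exact Set.mem_iUnion.mpr ⟨⟨q, hq1⟩, hq2⟩
  · intro p hp
    obtain ⟨i, hi⟩ := Set.mem_iUnion.mp hp
    exact hsub i.1 i.1.2 hi

lemma fiber_map {X Y : Type} [TopologicalSpace X] [TopologicalSpace Y]
    [CompactSpace X] [T2Space X] [TotallyDisconnectedSpace X]
    [CompactSpace Y] [T2Space Y] [TotallyDisconnectedSpace Y]
    {V : Set (X × Y)} (hV : IsClopen V) :
    ∃ (ι : Type) (_ : Finite ι) (f : Y → ι),
      (∀ t, IsOpen (f ⁻¹' {t})) ∧
      ∀ y y', f y = f y' → ∀ x, ((x, y) ∈ V ↔ (x, y') ∈ V) := by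
  classical
  obtain ⟨ι₀, hfin, A, B, hA, hB, hVeq⟩ := box_decomp hV
  refine ⟨Set ι₀, inferInstance, fun y => {i | y ∈ B i}, ?_, ?_⟩
  · intro t
    have : (fun y => {i | y ∈ B i} : Y → Set ι₀) ⁻¹' {t}
        = ⋂ i, if i ∈ t then B i else (B i)ᶜ := by
      ext y
      simp only [Set.mem_preimage, Set.mem_singleton_iff, Set.mem_iInter, Set.ext_iff,
        Set.mem_setOf_eq]
      constructor
      · intro h i
        by_cases hit : i ∈ t
        · simpa [hit] using (h i).mpr hit
        · simpa [hit] using fun hy => hit ((h i).mp hy)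
      · intro h i
        by_cases hit : i ∈ t <;> have := h i <;> simp [hit] at this <;> simp [hit, this]
    rw [this]
    exact isOpen_iInter_of_finite fun i => by
      by_cases hit : i ∈ t <;> simp [hit, (hB i).2, (hB i).1.isOpen_compl]
  · intro y y' h x
    have h' : ∀ i, y ∈ B i ↔ y' ∈ B i := fun i => by
      constructor <;> intro hy
      · exact (Set.ext_iff.mp h i).mp hy
      · exact (Set.ext_iff.mp h i).mpr hy
    rw [hVeq]
    simp only [Set.mem_iUnion, Set.mem_prod]
    exact ⟨fun ⟨i, h1, h2⟩ => ⟨i, h1, (h' i).mp h2⟩, fun ⟨i, h1, h2⟩ => ⟨i, h1, (h' i).mpr h2⟩⟩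

section Ctx
variable {R : Type} (add mul : R → R → R)

def ctxs (j : Fin 8) (p : R × R × R) (x : R) : R :=
  match j.val with
  | 0 => x
  | 1 => add p.1 x
  | 2 => mul p.2.1 x
  | 3 => mul x p.2.2
  | 4 => mul (mul p.2.1 x) p.2.2
  | 5 => add p.1 (mul p.2.1 x)
  | 6 => add p.1 (mul x p.2.2)
  | _ => add p.1 (mul (mul p.2.1 x) p.2.2)

def crel (U : Set R) (x y : R) : Prop :=
  ∀ (j : Fin 8) (p : R × R × R), (ctxs add mul j p x ∈ U ↔ ctxs add mul j p y ∈ U)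

variable {add mul}
variable (haddA : ∀ x y z : R, add (add x y) z = add x (add y z))
  (haddC : ∀ x y : R, add x y = add y x)
  (hmulA : ∀ x y z : R, mul (mul x y) z = mul x (mul y z))
  (hdl : ∀ x y z : R, mul x (add y z) = add (mul x y) (mul x z))
  (hdr : ∀ x y z : R, mul (add x y) z = add (mul x z) (mul y z))

lemma crel_refl (U : Set R) (x : R) : crel add mul U x x := fun _ _ => Iff.rfl

lemma crel_symm {U : Set R} {x y : R} (h : crel add mul U x y) : crel add mul U y x :=
  fun j p => (h j p).symm

lemma crel_trans {U : Set R} {x y z : R} (h : crel add mul U x y)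
    (h' : crel add mul U y z) : crel add mul U x z := fun j p => (h j p).trans (h' j p)

include haddA hdl hdr in
lemma crel_addl {U : Set R} {x y : R} (h : crel add mul U x y) (z : R) :
    crel add mul U (add z x) (add z y) := by
  intro j p
  fin_cases j
  · simpa [ctxs] using h 1 ⟨z, p.2⟩
  · simpa [ctxs, haddA] using h 1 ⟨add p.1 z, p.2⟩
  · simpa [ctxs, hdl] using h 5 ⟨mul p.2.1 z, p.2.1, p.2.2⟩
  · simpa [ctxs, hdr] using h 6 ⟨mul z p.2.2, p.2.1, p.2.2⟩
  · simpa [ctxs, hdl, hdr] using h 7 ⟨mul (mul p.2.1 z) p.2.2, p.2.1, p.2.2⟩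
  · simpa [ctxs, hdl, haddA] using h 5 ⟨add p.1 (mul p.2.1 z), p.2.1, p.2.2⟩
  · simpa [ctxs, hdr, haddA] using h 6 ⟨add p.1 (mul z p.2.2), p.2.1, p.2.2⟩
  · simpa [ctxs, hdl, hdr, haddA] using h 7 ⟨add p.1 (mul (mul p.2.1 z) p.2.2), p.2.1, p.2.2⟩

include hmulA hdl hdr in
lemma crel_mull {U : Set R} {x y : R} (h : crel add mul U x y) (z : R) :
    crel add mul U (mul z x) (mul z y) := by
  intro j p
  fin_cases j
  · simpa [ctxs] using h 2 ⟨p.1, z, p.2.2⟩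
  · simpa [ctxs] using h 5 ⟨p.1, z, p.2.2⟩
  · simpa [ctxs, hmulA] using h 2 ⟨p.1, mul p.2.1 z, p.2.2⟩
  · simpa [ctxs] using h 4 ⟨p.1, z, p.2.2⟩
  · simpa [ctxs, hmulA] using h 4 ⟨p.1, mul p.2.1 z, p.2.2⟩
  · simpa [ctxs, hmulA] using h 5 ⟨p.1, mul p.2.1 z, p.2.2⟩
  · simpa [ctxs] using h 7 ⟨p.1, z, p.2.2⟩
  · simpa [ctxs, hmulA] using h 7 ⟨p.1, mul p.2.1 z, p.2.2⟩

include hmulA hdl hdr in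
lemma crel_mulr {U : Set R} {x y : R} (h : crel add mul U x y) (z : R) :
    crel add mul U (mul x z) (mul y z) := by
  intro j p
  fin_cases j
  · simpa [ctxs] using h 3 ⟨p.1, p.2.1, z⟩
  · simpa [ctxs] using h 6 ⟨p.1, p.2.1, z⟩
  · simpa [ctxs, hmulA] using h 4 ⟨p.1, p.2.1, z⟩
  · simpa [ctxs, hmulA] using h 3 ⟨p.1, p.2.1, mul z p.2.2⟩
  · simpa [ctxs, hmulA] using h 4 ⟨p.1, p.2.1, mul z p.2.2⟩
  · simpa [ctxs, hmulA] using h 7 ⟨p.1, p.2.1, z⟩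
  · simpa [ctxs, hmulA] using h 6 ⟨p.1, p.2.1, mul z p.2.2⟩
  · simpa [ctxs, hmulA] using h 7 ⟨p.1, p.2.1, mul z p.2.2⟩

end Ctx

lemma cont_ctx {R : Type} [TopologicalSpace R] {add mul : R → R → R}
    (hca : Continuous fun p : R × R => add p.1 p.2)
    (hcm : Continuous fun p : R × R => mul p.1 p.2) (j : Fin 8) :
    Continuous fun q : (R × R × R) × R => ctxs add mul j q.1 q.2 := by
  have ca : ∀ {f g : ((R × R × R) × R) → R}, Continuous f → Continuous g →
      Continuous fun q => add (f q) (g q) := fun hf hg => hca.comp (hf.prodMk hg)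
  have cm : ∀ {f g : ((R × R × R) × R) → R}, Continuous f → Continuous g →
      Continuous fun q => mul (f q) (g q) := fun hf hg => hcm.comp (hf.prodMk hg)
  have c1 : Continuous fun q : (R × R × R) × R => q.1.1 := continuous_fst.fst
  have c2 : Continuous fun q : (R × R × R) × R => q.1.2.1 := continuous_fst.snd.fst
  have c3 : Continuous fun q : (R × R × R) × R => q.1.2.2 := continuous_fst.snd.snd
  have c4 : Continuous fun q : (R × R × R) × R => q.2 := continuous_snd
  fin_cases j
  · exact c4
  · exact ca c1 c4
  · exact cm c2 c4
  · exact cm c4 c3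
  · exact cm (cm c2 c4) c3
  · exact ca c1 (cm c2 c4)
  · exact ca c1 (cm c4 c3)
  · exact ca c1 (cm (cm c2 c4) c3)

theorem statement13 (R : Type) [tR : TopologicalSpace R]
    (add : R → R → R) (mul : R → R → R)
    (haddA : ∀ x y z : R, add (add x y) z = add x (add y z))
    (haddC : ∀ x y : R, add x y = add y x)
    (hmulA : ∀ x y z : R, mul (mul x y) z = mul x (mul y z))
    (hdl : ∀ x y z : R, mul x (add y z) = add (mul x y) (mul x z))
    (hdr : ∀ x y z : R, mul (add x y) z = add (mul x z) (mul y z))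
    (hca : Continuous fun p : R × R => add p.1 p.2)
    (hcm : Continuous fun p : R × R => mul p.1 p.2) :
    (CompactSpace R ∧ ∀ x y : R, x ≠ y →
        ∃ (B : Type) (addB : B → B → B) (mulB : B → B → B) (φ : R → B),
          Finite B ∧
          (∀ x y z : B, addB (addB x y) z = addB x (addB y z)) ∧
          (∀ x y : B, addB x y = addB y x) ∧
          (∀ x y z : B, mulB (mulB x y) z = mulB x (mulB y z)) ∧
          (∀ x y z : B, mulB x (addB y z) = addB (mulB x y) (mulB x z)) ∧
          (∀ x y z : B, mulB (addB x y) z = addB (mulB x z) (mulB y z)) ∧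
          @Continuous R B tR ⊥ φ ∧
          (∀ x y : R, φ (add x y) = addB (φ x) (φ y)) ∧
          (∀ x y : R, φ (mul x y) = mulB (φ x) (φ y)) ∧
          φ x ≠ φ y) ↔
      (CompactSpace R ∧ T2Space R ∧ TotallyDisconnectedSpace R) := by
  constructor
  · rintro ⟨hc, hsep⟩
    have hclopen : ∀ x y : R, x ≠ y → ∃ W : Set R, IsClopen W ∧ x ∈ W ∧ y ∉ W := by
      intro x y hxy
      obtain ⟨B, addB, mulB, φ, hfin, _, _, _, _, _, hcont, _, _, hne⟩ := hsep x y hxy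
      haveI : @DiscreteTopology B ⊥ := discreteTopology_bot B
      have hopen : ∀ o : Set B, IsOpen (φ ⁻¹' o) := fun o =>
        @Continuous.isOpen_preimage R B tR ⊥ φ hcont o (@isOpen_discrete B ⊥ ‹_› o)
      refine ⟨φ ⁻¹' {φ x}, ⟨?_, hopen _⟩, rfl, fun h => hne (Set.mem_singleton_iff.mp h).symm⟩
      rw [← isOpen_compl_iff]
      exact hopen {φ x}ᶜ
    refine ⟨hc, ⟨fun x y hxy => ?_⟩, ?_⟩
    · obtain ⟨W, hW, hx, hy⟩ := hclopen x y hxy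
      exact ⟨W, Wᶜ, hW.2, hW.compl.2, hx, hy, disjoint_compl_right⟩
    · haveI : TotallySeparatedSpace R := totallySeparatedSpace_iff_exists_isClopen.mpr
        (fun x y hxy => by
          obtain ⟨W, hW, hx, hy⟩ := hclopen x y hxy
          exact ⟨W, hW, hx, hy⟩)
      exact TotallySeparatedSpace.totallyDisconnectedSpace R
  · rintro ⟨hc, ht2, htd⟩
    haveI := hc; haveI := ht2; haveI := htd
    refine ⟨hc, fun x y hxy => ?_⟩
    haveI : TotallySeparatedSpace R := loc_compact_t2_tot_disc_iff_tot_sep.mp htd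
    obtain ⟨U, hU, hxU, hyU⟩ := exists_isClopen_of_totally_separated hxy
    have hVj : ∀ j : Fin 8, IsClopen {q : (R × R × R) × R | ctxs add mul j q.1 q.2 ∈ U} :=
      fun j => hU.preimage (cont_ctx hca hcm j)
    choose ι ιfin f hfopen hfsep using fun j : Fin 8 => fiber_map (hVj j)
    haveI : ∀ j, Finite (ι j) := ιfin
    set g : R → ∀ j, ι j := fun z j => f j z with hgdef
    have hgopen : ∀ t : ∀ j, ι j, IsOpen (g ⁻¹' {t}) := by
      intro t
      have : g ⁻¹' {t} = ⋂ j, f j ⁻¹' {t j} := by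
        ext z
        simp [hgdef, funext_iff]
      rw [this]
      exact isOpen_iInter_of_finite fun j => hfopen j (t j)
    have hgcrel : ∀ z z', g z = g z' → crel add mul U z z' := by
      intro z z' h j p
      exact hfsep j z z' (congrFun h j) p
    let s : Setoid R := ⟨crel add mul U,
      ⟨crel_refl U, fun h => crel_symm h, fun h h' => crel_trans h h'⟩⟩
    have haddcong : ∀ a b, crel add mul U a b → ∀ c d, crel add mul U c d →
        crel add mul U (add a c) (add b d) := by
      intro a b hab c d hcd
      have h1 : crel add mul U (add a c) (add a d) := crel_addl haddA hdl hdr hcd a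
      have h2 := crel_addl haddA hdl hdr hab d
      rw [haddC d a, haddC d b] at h2
      exact crel_trans h1 h2
    have hmulcong : ∀ a b, crel add mul U a b → ∀ c d, crel add mul U c d →
        crel add mul U (mul a c) (mul b d) := by
      intro a b hab c d hcd
      exact crel_trans (crel_mull hmulA hdl hdr hcd a) (crel_mulr hmulA hdl hdr hab d)
    have hclass : ∀ x0 : R, IsOpen {z | crel add mul U z x0} := by
      intro x0
      have : {z | crel add mul U z x0}
          = ⋃ (z' : R) (_ : crel add mul U z' x0), g ⁻¹' {g z'} := by
        apply le_antisymm
        · intro z hz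
          exact Set.mem_iUnion₂.mpr ⟨z, hz, rfl⟩
        · intro w hw
          obtain ⟨z', hz', hw'⟩ := Set.mem_iUnion₂.mp hw
          exact crel_trans (hgcrel _ _ hw') hz'
      rw [this]
      exact isOpen_iUnion fun z' => isOpen_iUnion fun _ => hgopen _
    refine ⟨Quotient s,
      fun q1 q2 => Quotient.liftOn₂ q1 q2 (fun a c => Quotient.mk s (add a c))
        (fun a c b d hab hcd => Quotient.sound (haddcong a b hab c d hcd)),
      fun q1 q2 => Quotient.liftOn₂ q1 q2 (fun a c => Quotient.mk s (mul a c))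
        (fun a c b d hab hcd => Quotient.sound (hmulcong a b hab c d hcd)),
      Quotient.mk s, ?_, ?_, ?_, ?_, ?_, ?_, ?_, fun a b => rfl, fun a b => rfl, ?_⟩
    · -- Finite
      haveI : Finite (∀ j, ι j) := Pi.finite
      haveI : Finite (Set.range g) := inferInstance
      choose sec hsec using fun t : Set.range g => t.2
      apply Finite.of_surjective (fun t : Set.range g => Quotient.mk s (sec t))
      intro b
      obtain ⟨z, rfl⟩ := Quotient.exists_rep b
      exact ⟨⟨g z, Set.mem_range_self z⟩,
        Quotient.sound (hgcrel _ _ (hsec ⟨g z, Set.mem_range_self z⟩))⟩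
    · exact fun q1 q2 q3 => Quotient.inductionOn₃ q1 q2 q3 fun a b c =>
        congrArg (Quotient.mk s) (haddA a b c)
    · exact fun q1 q2 => Quotient.inductionOn₂ q1 q2 fun a b =>
        congrArg (Quotient.mk s) (haddC a b)
    · exact fun q1 q2 q3 => Quotient.inductionOn₃ q1 q2 q3 fun a b c =>
        congrArg (Quotient.mk s) (hmulA a b c)
    · exact fun q1 q2 q3 => Quotient.inductionOn₃ q1 q2 q3 fun a b c =>
        congrArg (Quotient.mk s) (hdl a b c)
    · exact fun q1 q2 q3 => Quotient.inductionOn₃ q1 q2 q3 fun a b c =>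
        congrArg (Quotient.mk s) (hdr a b c)
    · -- continuity
      rw [continuous_def]
      intro o _
      have : Quotient.mk s ⁻¹' o
          = ⋃ (x0 : R) (_ : Quotient.mk s x0 ∈ o), {z | crel add mul U z x0} := by
        apply le_antisymm
        · intro z hz
          exact Set.mem_iUnion₂.mpr ⟨z, hz, crel_refl U z⟩
        · intro z hz
          obtain ⟨x0, hx0, hz'⟩ := Set.mem_iUnion₂.mp hz
          have he : Quotient.mk s z = Quotient.mk s x0 := Quotient.sound hz'
          show Quotient.mk s z ∈ o
          rw [he]
          exact hx0
      rw [this]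
      exact isOpen_iUnion fun x0 => isOpen_iUnion fun _ => hclass x0
    · -- separation
      intro h
      have h0 := (Quotient.exact h : crel add mul U x y) 0 ⟨x, x, x⟩
      simp only [ctxs] at h0
      exact hyU (h0.mp hxU)
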